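/- arXiv:1104.1361 — 2 statements merged into one kernel-verified Lean document; each statement's English description precedes it below -/
import Mathlib

section
/- Let G = Z_{p^r} ⋊_α Z_{q^s} with ord(α) = q^t. If H = ⟨x^{p^{i_1}} y^{q^{j_1}}, …, x^{p^{i_n}} y^{q^{j_n}}⟩ where all j_k ≥ t, then H = ⟨x^{p^i} y^{q^j}⟩ where i = min{i_1,…,i_n} and j = min{j_1,…,j_n}. -/
theorem aux_mem_zpowers_mul {G : Type*} [Group G] {a b : G} (h : Commute a b)
    (hco : Nat.Coprime (orderOf a) (orderOf b)) :
    a ∈ Subgroup.zpowers (a * b) := by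
  obtain ⟨k, hk1, hk2⟩ := Nat.chineseRemainder hco 1 0
  refine ⟨(k : ℤ), ?_⟩
  show (a * b) ^ (k : ℤ) = a
  rw [zpow_natCast, h.mul_pow]
  have ha : a ^ k = a := by
    rw [← pow_mod_orderOf, hk1, pow_mod_orderOf, pow_one]
  have hb : b ^ k = 1 := by
    rw [← pow_mod_orderOf, hk2, Nat.zero_mod, pow_zero]
  rw [ha, hb, mul_one]

theorem aux_mem_zpowers_pow {G : Type*} [Group G] {a : G} {n : ℕ}
    (hco : Nat.Coprime n (orderOf a)) (ho : 0 < orderOf a) :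
    a ∈ Subgroup.zpowers (a ^ n) := by
  rcases eq_or_lt_of_le (Nat.one_le_iff_ne_zero.mpr ho.ne') with h1 | h1
  · have : a = 1 := orderOf_eq_one_iff.mp h1.symm
    simp [this]
  · obtain ⟨m, -, hm⟩ := Nat.exists_mul_mod_eq_one_of_coprime hco h1
    refine ⟨(m : ℤ), ?_⟩
    show (a ^ n) ^ (m : ℤ) = a
    rw [zpow_natCast, ← pow_mul, ← pow_mod_orderOf, hm, pow_one]

theorem aux_conj {p r : ℕ} (hpr : 1 < p ^ r) {G : Type*} [Group G] (x y : G)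
    (α : (ZMod (p ^ r))ˣ) (hx : orderOf x = p ^ r)
    (hcomm : y * x * y⁻¹ = x ^ ((α : ZMod (p ^ r)).val)) :
    ∀ n : ℕ, y ^ n * x * (y ^ n)⁻¹ = x ^ (((α ^ n : (ZMod (p ^ r))ˣ) : ZMod (p ^ r)).val) := by
  haveI : NeZero (p ^ r) := ⟨by omega⟩
  haveI : Fact (1 < p ^ r) := ⟨hpr⟩
  intro n
  induction n with
  | zero => simp [ZMod.val_one]
  | succ n ih =>
    have h1 : y ^ (n + 1) * x * (y ^ (n + 1))⁻¹ = y * (y ^ n * x * (y ^ n)⁻¹) * y⁻¹ := by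
      rw [pow_succ']
      group
    rw [h1, ih]
    have h2 : y * x ^ (((α ^ n : (ZMod (p ^ r))ˣ) : ZMod (p ^ r)).val) * y⁻¹
        = (y * x * y⁻¹) ^ (((α ^ n : (ZMod (p ^ r))ˣ) : ZMod (p ^ r)).val) := by
      rw [conj_pow]
    rw [h2, hcomm, ← pow_mul]
    rw [← pow_mod_orderOf, hx]
    congr 1
    have : ((α ^ (n + 1) : (ZMod (p ^ r))ˣ) : ZMod (p ^ r)) =
        (α : ZMod (p ^ r)) * ((α ^ n : (ZMod (p ^ r))ˣ) : ZMod (p ^ r)) := by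
      push_cast [pow_succ']
      ring
    rw [this, ZMod.val_mul]

theorem stmt_12 (p q r s t : ℕ) (hp : p.Prime) (hq : q.Prime) (hpq : p ≠ q)
    (hpodd : Odd p) (hqodd : Odd q)
    (hr : 0 < r) (hs : 0 < s) (ht : 1 ≤ t) (hts : t ≤ s)
    (G : Type*) [Group G] (x y : G)
    (α : (ZMod (p ^ r))ˣ) (hα : orderOf α = q ^ t)
    (hx : orderOf x = p ^ r) (hy : orderOf y = q ^ s)
    (hcomm : y * x * y⁻¹ = x ^ ((α : ZMod (p ^ r)).val))
    (hgen : Subgroup.closure {x, y} = ⊤)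
    (hcard : Nat.card G = p ^ r * q ^ s) :
    ∀ n : ℕ, 0 < n → ∀ i j : Fin n → ℕ,
      (∀ k, i k ≤ r) → (∀ k, t ≤ j k) → (∀ k, j k ≤ s) →
      ∀ i0 j0 : ℕ,
        (∀ k, i0 ≤ i k) → (∃ k, i k = i0) →
        (∀ k, j0 ≤ j k) → (∃ k, j k = j0) →
        Subgroup.closure (Set.range fun k => x ^ p ^ i k * y ^ q ^ j k) =
          Subgroup.zpowers (x ^ p ^ i0 * y ^ q ^ j0) := by
  have hpr1 : 1 < p ^ r := Nat.one_lt_pow hr.ne' hp.one_lt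
  haveI : Fact (1 < p ^ r) := ⟨hpr1⟩
  haveI : NeZero (p ^ r) := ⟨by omega⟩
  haveI : Finite G := Nat.finite_of_card_ne_zero (by rw [hcard]; exact (Nat.mul_pos (Nat.pow_pos hp.pos) (Nat.pow_pos hq.pos)).ne')
  -- y^(q^t) commutes with x
  have hyt : Commute x (y ^ q ^ t) := by
    have h1 := aux_conj hpr1 x y α hx hcomm (q ^ t)
    have hαt : α ^ q ^ t = 1 := hα ▸ pow_orderOf_eq_one α
    rw [hαt, Units.val_one, ZMod.val_one, pow_one] at h1
    exact (mul_inv_eq_iff_eq_mul.mp h1).symm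
  -- x commutes with y^(q^j) for t ≤ j
  have hcxy : ∀ jj : ℕ, t ≤ jj → Commute x (y ^ q ^ jj) := by
    intro jj hjj
    have : y ^ q ^ jj = (y ^ q ^ t) ^ q ^ (jj - t) := by
      rw [← pow_mul, ← pow_add, Nat.add_sub_cancel' hjj]
    rw [this]
    exact hyt.pow_right _
  -- order computations
  have hordx : ∀ ii : ℕ, ii ≤ r → orderOf (x ^ p ^ ii) = p ^ (r - ii) := by
    intro ii hii
    rw [orderOf_pow, hx, Nat.gcd_eq_right (pow_dvd_pow p hii), Nat.pow_div hii hp.pos]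
  have hordy : ∀ jj : ℕ, jj ≤ s → orderOf (y ^ q ^ jj) = q ^ (s - jj) := by
    intro jj hjj
    rw [orderOf_pow, hy, Nat.gcd_eq_right (pow_dvd_pow q hjj), Nat.pow_div hjj hq.pos]
  have hcoqp : Nat.Coprime q p := ((Nat.coprime_primes hq hp).mpr (Ne.symm hpq))
  intro n hn i j hir hjt hjs i0 j0 hi0le hex1 hj0le hex2
  obtain ⟨k1, hk1⟩ := hex1
  obtain ⟨k2, hk2⟩ := hex2
  have hi0r : i0 ≤ r := hk1 ▸ hir k1
  have hj0t : t ≤ j0 := hk2 ▸ hjt k2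
  have hj0s : j0 ≤ s := hk2 ▸ hjs k2
  set a := x ^ p ^ i0 with hadef
  set b := y ^ q ^ j0 with hbdef
  have hab : Commute a b := (hcxy j0 hj0t).pow_left _
  have hoa : orderOf a = p ^ (r - i0) := hordx i0 hi0r
  have hob : orderOf b = q ^ (s - j0) := hordy j0 hj0s
  have hco : Nat.Coprime (orderOf a) (orderOf b) := by
    rw [hoa, hob]; exact Nat.Coprime.pow _ _ hcoqp.symm
  have hamem : a ∈ Subgroup.zpowers (a * b) := aux_mem_zpowers_mul hab hco
  have hbmem : b ∈ Subgroup.zpowers (a * b) := by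
    have := aux_mem_zpowers_mul hab.symm hco.symm
    rwa [← hab.eq] at this
  apply le_antisymm
  · rw [Subgroup.closure_le]
    rintro _ ⟨k, rfl⟩
    show x ^ p ^ i k * y ^ q ^ j k ∈ Subgroup.zpowers (a * b)
    have hxk : x ^ p ^ i k = a ^ p ^ (i k - i0) := by
      rw [hadef, ← pow_mul, ← pow_add, Nat.add_sub_cancel' (hi0le k)]
    have hyk : y ^ q ^ j k = b ^ q ^ (j k - j0) := by
      rw [hbdef, ← pow_mul, ← pow_add, Nat.add_sub_cancel' (hj0le k)]
    rw [hxk, hyk]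
    exact mul_mem (pow_mem hamem _) (pow_mem hbmem _)
  · rw [Subgroup.zpowers_le]
    have ha : a ∈ Subgroup.closure (Set.range fun k => x ^ p ^ i k * y ^ q ^ j k) := by
      have hgk : x ^ p ^ i k1 * y ^ q ^ j k1 ∈
          Subgroup.closure (Set.range fun k => x ^ p ^ i k * y ^ q ^ j k) :=
        Subgroup.subset_closure ⟨k1, rfl⟩
      have hcom : Commute (x ^ p ^ i k1) (y ^ q ^ j k1) := (hcxy (j k1) (hjt k1)).pow_left _
      have hpow : (x ^ p ^ i k1 * y ^ q ^ j k1) ^ q ^ (s - j k1) = a ^ q ^ (s - j k1) := by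
        rw [hcom.mul_pow, ← pow_mul (y), ← pow_add, Nat.add_sub_cancel' (hjs k1),
          ← hy, pow_orderOf_eq_one, mul_one, hk1]
      have hcoN : Nat.Coprime (q ^ (s - j k1)) (orderOf a) := by
        rw [hoa]; exact Nat.Coprime.pow _ _ hcoqp
      have := aux_mem_zpowers_pow hcoN (by rw [hoa]; exact Nat.pow_pos hp.pos)
      have hle : Subgroup.zpowers (a ^ q ^ (s - j k1)) ≤
          Subgroup.closure (Set.range fun k => x ^ p ^ i k * y ^ q ^ j k) := by
        rw [Subgroup.zpowers_le, ← hpow]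
        exact pow_mem hgk _
      exact hle this
    have hb : b ∈ Subgroup.closure (Set.range fun k => x ^ p ^ i k * y ^ q ^ j k) := by
      have hgk : x ^ p ^ i k2 * y ^ q ^ j k2 ∈
          Subgroup.closure (Set.range fun k => x ^ p ^ i k * y ^ q ^ j k) :=
        Subgroup.subset_closure ⟨k2, rfl⟩
      have hcom : Commute (x ^ p ^ i k2) (y ^ q ^ j k2) := (hcxy (j k2) (hjt k2)).pow_left _
      have hpow : (x ^ p ^ i k2 * y ^ q ^ j k2) ^ p ^ (r - i k2) = b ^ p ^ (r - i k2) := by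
        rw [hcom.mul_pow, ← pow_mul (x), ← pow_add, Nat.add_sub_cancel' (hir k2),
          ← hx, pow_orderOf_eq_one, one_mul, hk2]
      have hcoN : Nat.Coprime (p ^ (r - i k2)) (orderOf b) := by
        rw [hob]; exact Nat.Coprime.pow _ _ hcoqp.symm
      have := aux_mem_zpowers_pow hcoN (by rw [hob]; exact Nat.pow_pos hq.pos)
      have hle : Subgroup.zpowers (b ^ p ^ (r - i k2)) ≤
          Subgroup.closure (Set.range fun k => x ^ p ^ i k * y ^ q ^ j k) := by
        rw [Subgroup.zpowers_le, ← hpow]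
        exact pow_mem hgk _
      exact hle this
    exact mul_mem ha hb
end

section
/- Let G = Z_{p^r} ⋊_α Z_{q^s} with ord(α) = q^t and let H = ⟨x^a y^{q^j}⟩ with 0 ≤ j < t. Then H has order q^{s-j}, and the left coset of H containing x^{m_0} y^{n_0} is { x^{m_0 + a α^{n_0} S(n)} y^{n_0 + n q^j} : n = 0, …, q^{s-j} − 1 }, where S(n) = (α^{n q^j} − 1)/(α^{q^j} − 1) mod p^r. -/
lemma aux_pow_p (p : ℕ) (b : ℤ) (hb : (p:ℤ) ∣ b - 1) :
    ∀ k : ℕ, (p:ℤ)^(k+1) ∣ b^(p^k) - 1 := by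
  intro k
  induction k with
  | zero => simpa using hb
  | succ k ih =>
    have h1 : b ^ p ^ (k+1) - 1 = (∑ i ∈ Finset.range p, (b ^ p ^ k) ^ i) * (b ^ p ^ k - 1) := by
      rw [geom_sum_mul, ← pow_mul, ← pow_succ]
    have hsum : (p:ℤ) ∣ ∑ i ∈ Finset.range p, (b ^ p ^ k) ^ i := by
      have hb1 : ((b : ZMod p) : ZMod p) ^ p ^ k = 1 := by
        have : (p:ℤ) ∣ b ^ p ^ k - 1 := dvd_trans (dvd_pow_self (p:ℤ) (Nat.succ_ne_zero k)) ih
        have := (ZMod.intCast_zmod_eq_zero_iff_dvd _ _).mpr this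
        push_cast at this
        linear_combination this
      rw [← ZMod.intCast_zmod_eq_zero_iff_dvd]
      push_cast
      rw [hb1]
      simp [ZMod.natCast_self]
    rw [h1, pow_succ, mul_comm ((p:ℤ)^(k+1))]
    exact mul_dvd_mul hsum ih

lemma aux_unit (p q r t : ℕ) (hp : p.Prime) (hq : q.Prime) (hpq : p ≠ q) (hr : 0 < r)
    (α : (ZMod (p ^ r))ˣ) (hα : orderOf α = q ^ t) (j : ℕ) (hj : j < t) :
    IsUnit ((α : ZMod (p ^ r)) ^ q ^ j - 1) := by
  haveI : NeZero (p ^ r) := ⟨pow_ne_zero r hp.pos.ne'⟩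
  set β : (ZMod (p ^ r))ˣ := α ^ q ^ j with hβ
  have hordβ : orderOf β = q ^ (t - j) := by
    rw [hβ, orderOf_pow, hα, Nat.gcd_eq_right (pow_dvd_pow q hj.le), Nat.pow_div hj.le hq.pos]
  by_contra hne
  set z : ZMod (p ^ r) := (β : ZMod (p ^ r)) - 1 with hz
  have hne' : ¬ IsUnit z := by rw [hz, hβ]; push_cast; exact hne
  have hzz : ((z.val : ℕ) : ZMod (p ^ r)) = z := by simp [ZMod.natCast_val, ZMod.cast_id]
  have hcop : ¬ (z.val).Coprime (p ^ r) := by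
    intro h
    exact hne' (hzz ▸ (ZMod.isUnit_iff_coprime _ _).mpr h)
  have hpz : p ∣ z.val := by
    by_contra hd
    exact hcop (Nat.Coprime.pow_right r ((hp.coprime_iff_not_dvd).mpr hd).symm)
  set b : ℕ := (β : ZMod (p ^ r)).val with hb
  have hb1 : ((b:ℕ) : ZMod (p^r)) = (β : ZMod (p^r)) := by
    rw [hb, ZMod.natCast_val, ZMod.cast_id]
  have h3 : (((z.val : ℤ) - b + 1 : ℤ) : ZMod (p^r)) = 0 := by
    push_cast
    rw [hzz, hz, hb1]
    ring
  have h4 : ((p:ℤ)^r) ∣ (z.val : ℤ) - b + 1 := by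
    have := (ZMod.intCast_zmod_eq_zero_iff_dvd _ _).mp h3
    exact_mod_cast this
  have h5 : (p:ℤ) ∣ (z.val : ℤ) - b + 1 := dvd_trans (dvd_pow_self (p:ℤ) hr.ne') h4
  have hbz : (p : ℤ) ∣ (b : ℤ) - 1 := by
    have h6 : (p:ℤ) ∣ (z.val : ℤ) := Int.natCast_dvd_natCast.mpr hpz
    have : (b:ℤ) - 1 = (z.val : ℤ) - ((z.val : ℤ) - b + 1) := by ring
    rw [this]
    exact dvd_sub h6 h5
  have hpow : β ^ p ^ (r - 1) = 1 := by
    have hdvd : (p:ℤ) ^ r ∣ (b:ℤ) ^ p ^ (r-1) - 1 := by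
      have := aux_pow_p p (b:ℤ) hbz (r-1)
      rwa [Nat.sub_add_cancel hr] at this
    have h7 : (((b:ℤ) ^ p ^ (r-1) - 1 : ℤ) : ZMod (p^r)) = 0 := by
      rw [ZMod.intCast_zmod_eq_zero_iff_dvd]; exact_mod_cast hdvd
    push_cast at h7
    ext
    push_cast
    rw [← hb1]
    linear_combination h7
  have hd1 := orderOf_dvd_of_pow_eq_one hpow
  rw [hordβ] at hd1
  have htj : t - j ≠ 0 := by omega
  have hq1 : q ∣ p ^ (r-1) := dvd_trans (dvd_pow_self q htj) hd1
  exact hpq ((Nat.prime_dvd_prime_iff_eq hq hp).mp (hq.dvd_of_dvd_pow hq1)).symm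


theorem stmt_14 (p q r s t : ℕ) (hp : p.Prime) (hq : q.Prime) (hpq : p ≠ q)
    (hpodd : Odd p) (hqodd : Odd q)
    (hr : 0 < r) (hs : 0 < s) (ht : 1 ≤ t) (hts : t ≤ s)
    (G : Type*) [Group G] (x y : G)
    (α : (ZMod (p ^ r))ˣ) (hα : orderOf α = q ^ t)
    (hx : orderOf x = p ^ r) (hy : orderOf y = q ^ s)
    (hcomm : y * x * y⁻¹ = x ^ ((α : ZMod (p ^ r)).val))
    (hgen : Subgroup.closure {x, y} = ⊤)
    (hcard : Nat.card G = p ^ r * q ^ s) :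
    ∀ a j : ℕ, j < t →
      Nat.card (Subgroup.zpowers (x ^ a * y ^ q ^ j)) = q ^ (s - j) ∧
      ∀ m0 n0 : ℕ,
        ((x ^ m0 * y ^ n0) * ·) '' ((Subgroup.zpowers (x ^ a * y ^ q ^ j) : Subgroup G) : Set G) =
          {g : G | ∃ n < q ^ (s - j),
            g = x ^ (((m0 : ZMod (p ^ r)) + a * (α : ZMod (p ^ r)) ^ n0 *
              (((α : ZMod (p ^ r)) ^ (n * q ^ j) - 1) * ((α : ZMod (p ^ r)) ^ q ^ j - 1)⁻¹)).val) *
              y ^ (n0 + n * q ^ j)} := by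
  intro a j hj
  haveI : NeZero (p ^ r) := ⟨pow_ne_zero r hp.pos.ne'⟩
  -- basic cast lemma
  have hxc : ∀ n : ℕ, x ^ n = x ^ ((n : ZMod (p ^ r)).val) := by
    intro n
    rw [ZMod.val_natCast, ← hx, pow_mod_orderOf]
  have hcastval : ∀ m : ZMod (p ^ r), ((m.val : ℕ) : ZMod (p ^ r)) = m := by
    intro m; simp [ZMod.natCast_val, ZMod.cast_id]
  have hX : ∀ m n : ZMod (p ^ r), x ^ (m + n).val = x ^ m.val * x ^ n.val := by
    intro m n
    rw [← pow_add, hxc (m.val + n.val)]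
    congr 2
    push_cast
    rw [hcastval, hcastval]
  have hconjgen : ∀ (g h : G) (n : ℕ), (g * h * g⁻¹) ^ n = g * h ^ n * g⁻¹ := by
    intro g h n
    induction n with
    | zero => simp
    | succ n ih => rw [pow_succ, pow_succ, ih]; group
  have hconj1 : ∀ m : ZMod (p ^ r), y * x ^ m.val * y⁻¹ = x ^ (((α : ZMod (p ^ r)) * m).val) := by
    intro m
    rw [← hconjgen, hcomm, ← pow_mul, hxc ((α : ZMod (p ^ r)).val * m.val)]
    congr 2
    push_cast
    rw [hcastval, hcastval]
  have hconjn : ∀ (n : ℕ) (m : ZMod (p ^ r)),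
      y ^ n * x ^ m.val * (y ^ n)⁻¹ = x ^ (((α : ZMod (p ^ r)) ^ n * m).val) := by
    intro n
    induction n with
    | zero => intro m; simp
    | succ n ih =>
      intro m
      have h1 : y ^ (n + 1) * x ^ m.val * (y ^ (n + 1))⁻¹
          = y * (y ^ n * x ^ m.val * (y ^ n)⁻¹) * y⁻¹ := by group
      rw [h1, ih, hconj1]
      congr 2
      ring

  -- invertibility of α^{q^j} - 1
  have hu : IsUnit ((α : ZMod (p ^ r)) ^ q ^ j - 1) := aux_unit p q r t hp hq hpq hr α hα j hj
  set A : ZMod (p ^ r) := (α : ZMod (p ^ r)) with hA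
  set c : ℕ := q ^ j with hc
  set u : ZMod (p ^ r) := A ^ c with hudef
  set E : ℕ → ZMod (p ^ r) := fun n => (u ^ n - 1) * (u - 1)⁻¹ with hEdef
  have h1u : (u - 1) * (u - 1)⁻¹ = 1 := ZMod.mul_inv_of_unit _ hu
  have hE0 : E 0 = 0 := by simp [hEdef]
  have hEstep : ∀ n : ℕ, E (n + 1) = E n + u ^ n := by
    intro n
    show (u ^ (n+1) - 1) * (u - 1)⁻¹ = (u ^ n - 1) * (u - 1)⁻¹ + u ^ n
    linear_combination u ^ n * h1u
  set z : G := x ^ a * y ^ c with hzdef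
  have hzpow : ∀ n : ℕ, z ^ n = x ^ ((a * E n : ZMod (p ^ r)).val) * y ^ (c * n) := by
    intro n
    induction n with
    | zero => simp [hE0, ZMod.val_zero]
    | succ n ih =>
      have key : y ^ (c * n) * x ^ ((a : ZMod (p ^ r)).val)
          = x ^ ((A ^ (c * n) * a).val) * y ^ (c * n) :=
        mul_inv_eq_iff_eq_mul.mp (hconjn (c * n) (a : ZMod (p ^ r)))
      calc z ^ (n + 1) = (x ^ ((a * E n : ZMod (p ^ r)).val) * y ^ (c * n))
            * (x ^ ((a : ZMod (p ^ r)).val) * y ^ c) := by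
            rw [pow_succ, ih, hzdef, hxc a]
        _ = x ^ ((a * E n : ZMod (p ^ r)).val) * (y ^ (c * n) * x ^ ((a : ZMod (p ^ r)).val)) * y ^ c := by
            group
        _ = x ^ ((a * E n : ZMod (p ^ r)).val) * (x ^ ((A ^ (c * n) * a).val) * y ^ (c * n)) * y ^ c := by
            rw [key]
        _ = (x ^ ((a * E n : ZMod (p ^ r)).val) * x ^ ((A ^ (c * n) * a).val)) * (y ^ (c * n) * y ^ c) := by
            group
        _ = x ^ ((a * E n + A ^ (c * n) * a : ZMod (p ^ r)).val) * y ^ (c * n + c) := by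
            rw [hX, pow_add y (c * n) c]
        _ = x ^ ((a * E n + A ^ (c * n) * a : ZMod (p ^ r)).val) * y ^ (c * (n + 1)) := by
            rw [show c * n + c = c * (n + 1) from by ring]
        _ = x ^ ((a * E (n + 1) : ZMod (p ^ r)).val) * y ^ (c * (n + 1)) := by
            congr 2
            rw [hEstep, hudef, ← pow_mul]
            ring

  -- combination lemma
  have hcomb : ∀ m0 n0 n : ℕ, (x ^ m0 * y ^ n0) * z ^ n
      = x ^ (((m0 : ZMod (p ^ r)) + a * A ^ n0 *
          ((A ^ (n * q ^ j) - 1) * (A ^ q ^ j - 1)⁻¹)).val) * y ^ (n0 + n * q ^ j) := by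
    intro m0 n0 n
    have key : y ^ n0 * x ^ ((a * E n : ZMod (p ^ r)).val)
        = x ^ ((A ^ n0 * (a * E n)).val) * y ^ n0 :=
      mul_inv_eq_iff_eq_mul.mp (hconjn n0 _)
    calc (x ^ m0 * y ^ n0) * z ^ n
        = x ^ ((m0 : ZMod (p ^ r)).val) * (y ^ n0 * x ^ ((a * E n : ZMod (p ^ r)).val)) * y ^ (c * n) := by
          rw [hzpow, hxc m0]; group
      _ = x ^ ((m0 : ZMod (p ^ r)).val) * (x ^ ((A ^ n0 * (a * E n)).val) * y ^ n0) * y ^ (c * n) := by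
          rw [key]
      _ = (x ^ ((m0 : ZMod (p ^ r)).val) * x ^ ((A ^ n0 * (a * E n)).val)) * (y ^ n0 * y ^ (c * n)) := by
          group
      _ = x ^ (((m0 : ZMod (p ^ r)) + A ^ n0 * (a * E n)).val) * y ^ (n0 + c * n) := by
          rw [hX, pow_add y n0 (c * n)]
      _ = x ^ (((m0 : ZMod (p ^ r)) + a * A ^ n0 *
            ((A ^ (n * q ^ j) - 1) * (A ^ q ^ j - 1)⁻¹)).val) * y ^ (n0 + n * q ^ j) := by
          have hEeq : A ^ n0 * ((a : ZMod (p ^ r)) * E n)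
              = a * A ^ n0 * ((A ^ (n * q ^ j) - 1) * (A ^ q ^ j - 1)⁻¹) := by
            show A ^ n0 * ((a : ZMod (p ^ r)) * ((u ^ n - 1) * (u - 1)⁻¹)) = _
            rw [hudef, ← pow_mul, show c * n = n * q ^ j from by rw [hc]; ring, hc]
            ring
          rw [show n0 + c * n = n0 + n * q ^ j from by rw [hc]; ring, hEeq]
  -- splitting 1 = x^m * y^k forces y^k = 1
  have hsplit : ∀ m k : ℕ, x ^ m * y ^ k = 1 → y ^ k = 1 := by
    intro m k h
    have h1 : y ^ k = (x ^ m)⁻¹ := (mul_eq_one_iff_inv_eq.mp h).symm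
    have h2 : orderOf (y ^ k) ∣ q ^ s := hy ▸ orderOf_pow_dvd k
    have h3 : orderOf (y ^ k) ∣ p ^ r := by
      rw [h1, orderOf_inv]
      exact hx ▸ orderOf_pow_dvd m
    have hcop : Nat.Coprime (p ^ r) (q ^ s) :=
      Nat.Coprime.pow r s ((Nat.coprime_primes hp hq).mpr hpq)
    have : orderOf (y ^ k) = 1 := Nat.dvd_one.mp (hcop ▸ Nat.dvd_gcd h3 h2)
    exact orderOf_eq_one_iff.mp this
  -- z ^ (q ^ (s - j)) = 1
  have hzb : z ^ q ^ (s - j) = 1 := by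
    rw [hzpow]
    have hcc : c * q ^ (s - j) = q ^ s := by
      rw [hc, ← pow_add, Nat.add_sub_cancel' (hj.le.trans hts)]
    have hαqs : α ^ q ^ s = 1 := orderOf_dvd_iff_pow_eq_one.mp (hα ▸ pow_dvd_pow q hts)
    have hu1 : u ^ q ^ (s - j) = 1 := by
      rw [hudef, ← pow_mul, hcc, hA, ← Units.val_pow_eq_pow_val, hαqs, Units.val_one]
    have hE1 : E (q ^ (s - j)) = 0 := by
      show (u ^ q ^ (s - j) - 1) * (u - 1)⁻¹ = 0
      rw [hu1]
      ring
    rw [hE1, mul_zero, ZMod.val_zero, pow_zero, one_mul, hcc, ← hy, pow_orderOf_eq_one]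
  -- order of z
  have hordz : orderOf z = q ^ (s - j) := by
    apply Nat.dvd_antisymm (orderOf_dvd_of_pow_eq_one hzb)
    have h1 : z ^ orderOf z = 1 := pow_orderOf_eq_one z
    rw [hzpow] at h1
    have h2 := hsplit _ _ h1
    have h3 : q ^ s ∣ c * orderOf z := hy ▸ orderOf_dvd_of_pow_eq_one h2
    have h4 : q ^ j * q ^ (s - j) ∣ q ^ j * orderOf z := by
      rw [← pow_add, Nat.add_sub_cancel' (hj.le.trans hts)]
      exact hc ▸ h3
    exact (mul_dvd_mul_iff_left (pow_ne_zero j hq.pos.ne')).mp h4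
  refine ⟨by rw [Nat.card_zpowers, hordz], ?_⟩
  intro m0 n0
  ext g
  simp only [Set.mem_image, SetLike.mem_coe, Subgroup.mem_zpowers_iff, Set.mem_setOf_eq]
  constructor
  · rintro ⟨w, ⟨k, rfl⟩, rfl⟩
    have hNpos : ((q : ℤ) ^ (s - j)) ≠ 0 := by have := hq.pos; positivity
    have h5 : 0 ≤ k % ((q : ℤ) ^ (s - j)) := Int.emod_nonneg k hNpos
    have h6 : k % ((q : ℤ) ^ (s - j)) < (q : ℤ) ^ (s - j) :=
      Int.emod_lt_of_pos k (by have := hq.pos; positivity)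
    have h7 : (k % ((q : ℤ) ^ (s - j))).toNat < q ^ (s - j) := by
      rw [← Nat.cast_lt (α := ℤ), Int.toNat_of_nonneg h5]
      push_cast
      exact h6
    refine ⟨(k % ((q : ℤ) ^ (s - j))).toNat, h7, ?_⟩
    have hzk : z ^ k = z ^ ((k % ((q : ℤ) ^ (s - j))).toNat) := by
      conv_lhs => rw [← zpow_mod_orderOf]
      rw [hordz, ← zpow_natCast]
      congr 1
      push_cast
      rw [Int.toNat_of_nonneg h5]
    rw [hzk]
    exact hcomb m0 n0 _
  · rintro ⟨n, hn, rfl⟩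
    exact ⟨z ^ n, ⟨(n : ℤ), zpow_natCast z n⟩, hcomb m0 n0 n⟩
end
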